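/- Let G' be the non-uniform replacement product of G and 𝓗, with rotation-map permutation matrix R_G and block-diagonal matrix J_𝓗 whose block for vertex u is the deg_G(u) × deg_G(u) all-1/deg_G(u) matrix. Define P := (1/2)·J_𝓗(I + R_G)J_𝓗. Then for all vertices (u,i), (v,j) of G', the entry P_{(u,i),(v,j)} equals W_G(u,v)/deg_G(v), where W_G = (I + D_G^{-1}A_G)/2 is the lazy random walk matrix of G. -/

import Mathlib

open Finset

/-- Vertices of the non-uniform replacement product: a cloud `Fin (deg u)` per vertex `u`. -/
abbrev RPVert {V : Type*} [Fintype V] (G : SimpleGraph V) [DecidableRel G.Adj] :=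
  Σ u : V, Fin (G.degree u)

lemma sigma_sum_eq {V : Type*} [Fintype V] (G : SimpleGraph V) [DecidableRel G.Adj]
    (g : RPVert G → ℝ) :
    ∑ x : RPVert G, g x = ∑ a : V, ∑ b : Fin (G.degree a), g ⟨a, b⟩ := by
  rw [← Finset.univ_sigma_univ, Finset.sum_sigma]

lemma sum_fiber_ind {V : Type*} [Fintype V] [DecidableEq V]
    (G : SimpleGraph V) [DecidableRel G.Adj] (r : RPVert G) (v : V) :
    ∑ l : Fin (G.degree v), (if r = ⟨v, l⟩ then (1:ℝ) else 0)
      = if r.1 = v then 1 else 0 := by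
  obtain ⟨w, m⟩ := r
  by_cases h : w = v
  · subst h
    simp [Sigma.mk.inj_iff]
  · simp [Sigma.mk.inj_iff, h]


lemma sum_if_const {α : Type*} [Fintype α] (p : Prop) [Decidable p] (f : α → ℝ) :
    ∑ b : α, (if p then f b else 0) = if p then ∑ b : α, f b else 0 := by
  split <;> simp

/-- Let `R_G` be the rotation-map permutation matrix of `G`, `J_𝓗` the block
diagonal matrix whose block at `u` is the all-`1/deg(u)` matrix, and
`P := (1/2)·J_𝓗(I + R_G)J_𝓗`.  Then `P_{(u,i),(v,j)} = W_G(u,v)/deg_G(v)` where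
`W_G = (I + D⁻¹A)/2` is the lazy random walk matrix of `G`. -/
theorem P_entries_eq_lazy_walk
    {V : Type*} [Fintype V] [DecidableEq V]
    (G : SimpleGraph V) [DecidableRel G.Adj]
    (hdeg : ∀ v : V, 0 < G.degree v)
    (rot : RPVert G → RPVert G)
    (hrot : Function.Involutive rot)
    (hcount : ∀ u v : V,
      ((Finset.univ.filter fun i : Fin (G.degree u) => (rot ⟨u, i⟩).fst = v).card)
        = if G.Adj u v then 1 else 0)
    (R J P : Matrix (RPVert G) (RPVert G) ℝ)
    (hR : R = Matrix.of fun x y => if rot x = y then (1 : ℝ) else 0)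
    (hJ : J = Matrix.of fun x y =>
      if x.1 = y.1 then ((G.degree x.1 : ℝ))⁻¹ else 0)
    (hP : P = (2 : ℝ)⁻¹ • (J * ((1 : Matrix (RPVert G) (RPVert G) ℝ) + R) * J))
    (WG : Matrix V V ℝ)
    (hWG : WG = Matrix.of fun u v =>
      (2 : ℝ)⁻¹ * ((if u = v then (1 : ℝ) else 0)
        + (if G.Adj u v then (1 : ℝ) else 0) / (G.degree u : ℝ))) :
    ∀ x y : RPVert G, P x y = WG x.1 y.1 / (G.degree y.1 : ℝ) := by
  rintro ⟨u, i⟩ ⟨v, j⟩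
  subst hR hJ hP hWG
  have hdu : (G.degree u : ℝ) ≠ 0 := Nat.cast_ne_zero.mpr (hdeg u).ne'
  have hdv : (G.degree v : ℝ) ≠ 0 := Nat.cast_ne_zero.mpr (hdeg v).ne'
  have S1 : ∑ k : Fin (G.degree u), ∑ b : Fin (G.degree v),
      (if (⟨u, k⟩ : RPVert G) = ⟨v, b⟩ then (1:ℝ) else 0)
      = if u = v then (G.degree u : ℝ) else 0 := by
    have : ∀ k : Fin (G.degree u),
        ∑ b : Fin (G.degree v), (if (⟨u, k⟩ : RPVert G) = ⟨v, b⟩ then (1:ℝ) else 0)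
        = if u = v then 1 else 0 := fun k => sum_fiber_ind G ⟨u, k⟩ v
    simp only [this]
    simp [Finset.sum_ite_eq]
  have S2 : ∑ k : Fin (G.degree u), ∑ b : Fin (G.degree v),
      (if rot ⟨u, k⟩ = ⟨v, b⟩ then (1:ℝ) else 0)
      = if G.Adj u v then 1 else 0 := by
    have : ∀ k : Fin (G.degree u),
        ∑ b : Fin (G.degree v), (if rot ⟨u, k⟩ = ⟨v, b⟩ then (1:ℝ) else 0)
        = if (rot ⟨u, k⟩).1 = v then 1 else 0 := fun k => sum_fiber_ind G _ v
    simp only [this]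
    rw [Finset.sum_boole, hcount]
    split <;> norm_num
  simp only [Matrix.smul_apply, Matrix.mul_apply, Matrix.of_apply, Matrix.add_apply,
    Matrix.one_apply, smul_eq_mul]
  rw [sigma_sum_eq]
  simp only [sigma_sum_eq G]
  simp only [ite_mul, mul_ite, zero_mul, mul_zero, sum_if_const, Finset.sum_ite_eq,
    Finset.sum_ite_eq', Finset.mem_univ, if_true]
  rw [← Finset.sum_mul (R := ℝ) (ι := Fin (G.degree v)) univ _ (↑(G.degree v))⁻¹, Finset.sum_comm]
  simp only [← Finset.mul_sum, Finset.sum_add_distrib]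
  rw [S1, S2]
  by_cases huv : u = v <;> by_cases hadj : G.Adj u v <;>
    simp only [huv, hadj, if_true, if_false] <;> field_simp <;> ring
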